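/- Let X be a nonnegative random variable with E[X] ≤ 2 and X ≤ M almost surely, and let ε ~ N(0,σ²) be independent of X. Then for every λ with 0 < λ ≤ n/(σM), E[exp((λ/n) ε X)] ≤ 1 + (2/M)(exp(λ²σ²M²/n²) − 1). -/

import Mathlib

open MeasureTheory ProbabilityTheory Real

lemma aux_pdf (v : NNReal) (hv : v ≠ 0) (c x : ℝ) :
    rexp (c * x) * gaussianPDFReal 0 v x
      = rexp (v * c ^ 2 / 2) * gaussianPDFReal (c * v) v x := by
  have hv' : (v : ℝ) ≠ 0 := by exact_mod_cast hv
  simp only [gaussianPDFReal, sub_zero]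
  rw [mul_left_comm, mul_left_comm (rexp _), ← Real.exp_add, ← Real.exp_add]
  congr 2
  field_simp
  ring

lemma gaussian_density (v : NNReal) (hv : v ≠ 0) :
    gaussianReal 0 v
      = volume.withDensity (fun x => ((gaussianPDFReal 0 v x).toNNReal : ENNReal)) := by
  rw [gaussianReal_of_var_ne_zero _ hv]; rfl

lemma gaussian_mgf_integrable (v : NNReal) (hv : v ≠ 0) (c : ℝ) :
    Integrable (fun x => rexp (c * x)) (gaussianReal 0 v) := by
  rw [gaussian_density v hv]
  have hmeas : Measurable fun x : ℝ => (gaussianPDFReal 0 v x).toNNReal :=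
    (measurable_gaussianPDFReal 0 v).real_toNNReal
  refine (integrable_withDensity_iff_integrable_smul hmeas).mpr ?_
  have : (fun x => (gaussianPDFReal 0 v x).toNNReal • rexp (c * x))
      = fun x => rexp (v * c ^ 2 / 2) * gaussianPDFReal (c * v) v x := by
    ext x
    rw [NNReal.smul_def, Real.coe_toNNReal _ (gaussianPDFReal_nonneg 0 v x),
      smul_eq_mul, mul_comm (gaussianPDFReal 0 v x), aux_pdf v hv c x]
  rw [this]
  exact (integrable_gaussianPDFReal _ _).const_mul _

lemma gaussian_mgf (v : NNReal) (hv : v ≠ 0) (c : ℝ) :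
    ∫ x, rexp (c * x) ∂(gaussianReal 0 v) = rexp (v * c ^ 2 / 2) := by
  rw [gaussian_density v hv]
  have hmeas : Measurable fun x : ℝ => (gaussianPDFReal 0 v x).toNNReal :=
    (measurable_gaussianPDFReal 0 v).real_toNNReal
  rw [integral_withDensity_eq_integral_smul hmeas]
  have : (fun x => (gaussianPDFReal 0 v x).toNNReal • rexp (c * x))
      = fun x => rexp (v * c ^ 2 / 2) * gaussianPDFReal (c * v) v x := by
    ext x
    rw [NNReal.smul_def, Real.coe_toNNReal _ (gaussianPDFReal_nonneg 0 v x),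
      smul_eq_mul, mul_comm (gaussianPDFReal 0 v x), aux_pdf v hv c x]
  rw [this, integral_const_mul, integral_gaussianPDFReal_eq_one _ hv, mul_one]

set_option maxHeartbeats 1000000 in
theorem mgf_gaussian_weighted {Ω : Type} [MeasurableSpace Ω]
    (P : Measure Ω) [IsProbabilityMeasure P]
    (X ε : Ω → ℝ) (hXm : Measurable X) (hεm : Measurable ε)
    (σ : NNReal) (hσ : 0 < σ) (M : ℝ) (hM : 0 < M) (n : ℝ) (hn : 0 < n)
    (hX0 : ∀ ω, 0 ≤ X ω) (hXint : Integrable X P) (hXmean : ∫ ω, X ω ∂P ≤ 2)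
    (hXbd : ∀ᵐ ω ∂P, X ω ≤ M)
    (hε : Measure.map ε P = gaussianReal 0 (σ ^ 2))
    (hindep : IndepFun ε X P)
    (lam : ℝ) (hlam0 : 0 < lam) (hlam1 : lam ≤ n / (σ * M)) :
    ∫ ω, exp ((lam / n) * (ε ω * X ω)) ∂P ≤
      1 + (2 / M) * (exp (lam ^ 2 * σ ^ 2 * M ^ 2 / n ^ 2) - 1) := by
  set v : NNReal := σ ^ 2 with hv_def
  have hv : v ≠ 0 := pow_ne_zero 2 hσ.ne'
  set t : ℝ := lam / n with ht_def
  have ht0 : 0 < t := div_pos hlam0 hn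
  set μg : Measure ℝ := gaussianReal 0 v with hμg
  set ν : Measure Ω → Measure ℝ := Measure.map X with hνf -- dummy
  clear hνf ν
  set ν : Measure ℝ := P.map X with hν
  haveI : IsProbabilityMeasure ν := Measure.isProbabilityMeasure_map hXm.aemeasurable
  -- the law of (X, ε) is the product measure
  have hmap : P.map (fun ω => (X ω, ε ω)) = ν.prod μg := by
    rw [hν, ← hε]
    exact (ProbabilityTheory.indepFun_iff_map_prod_eq_prod_map_map
      hXm.aemeasurable hεm.aemeasurable).mp hindep.symm
  have hFmeas : Measurable fun p : ℝ × ℝ => rexp (t * (p.2 * p.1)) :=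
    ((measurable_snd.mul measurable_fst).const_mul t).exp
  -- a.e. bounds under ν
  have hν_bd : ∀ᵐ x ∂ν, 0 ≤ x ∧ x ≤ M := by
    rw [hν, ae_map_iff hXm.aemeasurable]
    · filter_upwards [hXbd] with ω h using ⟨hX0 ω, h⟩
    · exact measurableSet_le measurable_const measurable_id |>.inter
        (measurableSet_le measurable_id measurable_const)
  -- the inner Gaussian integral
  have hinner : ∀ x : ℝ, ∫ e, rexp (t * (e * x)) ∂μg = rexp (v * (t * x) ^ 2 / 2) := by
    intro x
    have : (fun e => rexp (t * (e * x))) = fun e => rexp ((t * x) * e) := by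
      ext e; ring_nf
    rw [this, hμg, gaussian_mgf v hv (t * x)]
  have hinner_int : ∀ x : ℝ, Integrable (fun e => rexp (t * (e * x))) μg := by
    intro x
    have : (fun e => rexp (t * (e * x))) = fun e => rexp ((t * x) * e) := by
      ext e; ring_nf
    rw [this, hμg]
    exact gaussian_mgf_integrable v hv (t * x)
  -- integrability on the product
  have hFint : Integrable (fun p : ℝ × ℝ => rexp (t * (p.2 * p.1))) (ν.prod μg) := by
    refine (integrable_prod_iff hFmeas.aestronglyMeasurable).mpr ⟨?_, ?_⟩
    · exact Filter.Eventually.of_forall fun x => hinner_int x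
    · have heq : (fun x => ∫ e, ‖rexp (t * (e * x))‖ ∂μg)
          = fun x => rexp (v * (t * x) ^ 2 / 2) := by
        ext x
        simp_rw [Real.norm_eq_abs, abs_exp]
        exact hinner x
      rw [heq]
      refine Integrable.mono' (integrable_const (rexp (v * (t * M) ^ 2 / 2)))
        (Measurable.aestronglyMeasurable
          ((((measurable_id'.const_mul t).pow_const 2).const_mul (v:ℝ)).div_const 2).exp) ?_
      filter_upwards [hν_bd] with x hx
      rw [Real.norm_eq_abs, abs_exp]
      apply Real.exp_le_exp.mpr
      have h1 : (t * x) ^ 2 ≤ (t * M) ^ 2 :=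
        pow_le_pow_left₀ (mul_nonneg ht0.le hx.1)
          (mul_le_mul_of_nonneg_left hx.2 ht0.le) 2
      have h2 : (0:ℝ) ≤ (v:ℝ) := v.coe_nonneg
      gcongr
  -- rewrite the LHS
  have hLHS : ∫ ω, rexp (t * (ε ω * X ω)) ∂P = ∫ x, rexp (v * (t * x) ^ 2 / 2) ∂ν := by
    have h1 : ∫ ω, rexp (t * (ε ω * X ω)) ∂P
        = ∫ p : ℝ × ℝ, rexp (t * (p.2 * p.1)) ∂(ν.prod μg) := by
      rw [← hmap, integral_map (hXm.prodMk hεm).aemeasurable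
        hFmeas.aestronglyMeasurable]
    rw [h1, MeasureTheory.integral_prod _ hFint]
    exact integral_congr_ae (Filter.Eventually.of_forall fun x => hinner x)
  rw [hLHS]
  set K : ℝ := rexp (lam ^ 2 * σ ^ 2 * M ^ 2 / n ^ 2) with hK
  have hK1 : 1 ≤ K := by
    rw [hK]; apply Real.one_le_exp; positivity
  -- pointwise bound
  have hpt : ∀ᵐ x ∂ν, rexp (v * (t * x) ^ 2 / 2) ≤ 1 + x / M * (K - 1) := by
    filter_upwards [hν_bd] with x hx
    obtain ⟨hx0, hxM⟩ := hx
    set A : ℝ := v * (t * M) ^ 2 / 2 with hA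
    set θ : ℝ := x ^ 2 / M ^ 2 with hθ
    have hθ0 : 0 ≤ θ := by positivity
    have hθ1 : θ ≤ 1 := by
      rw [hθ, div_le_one (by positivity)]
      nlinarith
    have hconv := convexOn_exp.2 (Set.mem_univ (0 : ℝ)) (Set.mem_univ A)
      (by linarith : (0:ℝ) ≤ 1 - θ) hθ0 (by ring)
    simp only [smul_eq_mul, mul_zero, zero_add, Real.exp_zero, mul_one] at hconv
    have hθA : θ * A = v * (t * x) ^ 2 / 2 := by
      rw [hθ, hA]; field_simp
    rw [hθA] at hconv
    have hstep1 : rexp (v * (t * x) ^ 2 / 2) ≤ 1 + θ * (rexp A - 1) := by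
      calc rexp (v * (t * x) ^ 2 / 2) ≤ (1 - θ) * 1 + θ * rexp A := by
            simpa using hconv
        _ = 1 + θ * (rexp A - 1) := by ring
    have hexpA : rexp A ≤ K := by
      rw [hK, hA]
      apply Real.exp_le_exp.mpr
      have hveq : (v : ℝ) = (σ : ℝ) ^ 2 := by rw [hv_def]; push_cast; ring
      rw [hveq, ht_def]
      have heq2 : (σ:ℝ) ^ 2 * (lam / n * M) ^ 2 / 2
          = (lam ^ 2 * (σ:ℝ) ^ 2 * M ^ 2 / n ^ 2) / 2 := by
        field_simp
      rw [heq2]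
      exact half_le_self (by positivity)
    have hθx : θ ≤ x / M := by
      rw [hθ]
      rw [div_le_div_iff₀ (by positivity) hM]
      nlinarith [mul_le_mul_of_nonneg_right hxM (mul_nonneg hx0 hM.le)]
    have h1 : 0 ≤ rexp A - 1 := by
      have := Real.one_le_exp (show (0:ℝ) ≤ A by rw [hA]; positivity)
      linarith
    have h2 : 0 ≤ x / M := by positivity
    nlinarith
  -- integrability of both sides
  have hLint : Integrable (fun x => rexp (v * (t * x) ^ 2 / 2)) ν := by
    refine Integrable.mono' (integrable_const (rexp (v * (t * M) ^ 2 / 2)))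
      (Measurable.aestronglyMeasurable
        ((((measurable_id'.const_mul t).pow_const 2).const_mul (v:ℝ)).div_const 2).exp) ?_
    filter_upwards [hν_bd] with x hx
    rw [Real.norm_eq_abs, abs_exp]
    apply Real.exp_le_exp.mpr
    have h1 : (t * x) ^ 2 ≤ (t * M) ^ 2 :=
      pow_le_pow_left₀ (mul_nonneg ht0.le hx.1)
        (mul_le_mul_of_nonneg_left hx.2 ht0.le) 2
    have h2 : (0:ℝ) ≤ (v:ℝ) := v.coe_nonneg
    gcongr
  have hid : Integrable (fun x : ℝ => x) ν := by
    rw [hν]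
    exact (integrable_map_measure aestronglyMeasurable_id hXm.aemeasurable).mpr hXint
  have hRint : Integrable (fun x : ℝ => 1 + x / M * (K - 1)) ν := by
    have : (fun x : ℝ => 1 + x / M * (K - 1))
        = fun x : ℝ => 1 + x * ((K - 1) / M) := by ext x; ring
    rw [this]
    exact (integrable_const 1).add (hid.mul_const _)
  calc ∫ x, rexp (v * (t * x) ^ 2 / 2) ∂ν
      ≤ ∫ x, (1 + x / M * (K - 1)) ∂ν := integral_mono_ae hLint hRint hpt
    _ = 1 + (∫ x, x ∂ν) * ((K - 1) / M) := by
        have : (fun x : ℝ => 1 + x / M * (K - 1))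
            = fun x : ℝ => 1 + x * ((K - 1) / M) := by ext x; ring
        rw [this, integral_add (integrable_const 1) (hid.mul_const _),
          integral_const, integral_mul_const]
        simp
    _ ≤ 1 + 2 * ((K - 1) / M) := by
        have hX2 : ∫ x, x ∂ν ≤ 2 := by
          rw [hν, integral_map hXm.aemeasurable measurable_id'.aestronglyMeasurable]
          exact hXmean
        have hc : 0 ≤ (K - 1) / M := by
          apply div_nonneg _ hM.le; linarith
        nlinarith
    _ = 1 + 2 / M * (K - 1) := by ring
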